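/- (Hahn's characterization, one direction) Let u be a regular linear functional satisfying D(φu) = ψu with (φ, ψ) an admissible pair, and let (P_n) be the monic OPS for u. Then the sequence of normalized derivatives Q_n := P_{n+1}'/(n+1) is a monic OPS with respect to the functional φu, and ⟨φu, Q_n Q_m⟩ = −(d_n/(n+1)) ⟨u, P_{n+1}²⟩ δ_{nm}, where d_n := na + p with a the coefficient of x² in φ and p the coefficient of x in ψ. -/

import Mathlib

open Polynomial

noncomputable def Qd (P : ℕ → Polynomial ℂ) (n : ℕ) : Polynomial ℂ :=
  C (((n : ℂ) + 1)⁻¹) * Polynomial.derivative (P (n + 1))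

lemma Qd_def (P : ℕ → Polynomial ℂ) (n : ℕ) :
    Qd P n = C (((n : ℂ) + 1)⁻¹) * Polynomial.derivative (P (n + 1)) := rfl

lemma coeff_phi_mul (a b c : ℂ) (g : Polynomial ℂ) (k : ℕ) :
    ((C a * X ^ 2 + C b * X + C c) * g).coeff (k + 2)
      = a * g.coeff k + b * g.coeff (k + 1) + c * g.coeff (k + 2) := by
  have h : (C a * X ^ 2 + C b * X + C c) * g
      = C a * (X ^ 2 * g) + C b * (X ^ 1 * g) + C c * g := by ring
  rw [h, coeff_add, coeff_add, coeff_C_mul, coeff_C_mul, coeff_C_mul,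
    coeff_X_pow_mul g 2 k, show k + 2 = (k + 1) + 1 from rfl, coeff_X_pow_mul g 1 (k + 1)]

lemma coeff_psi_mul (p q : ℂ) (g : Polynomial ℂ) (k : ℕ) :
    ((C p * X + C q) * g).coeff (k + 1) = p * g.coeff k + q * g.coeff (k + 1) := by
  have h : (C p * X + C q) * g = C p * (X ^ 1 * g) + C q * g := by ring
  rw [h, coeff_add, coeff_C_mul, coeff_C_mul, coeff_X_pow_mul g 1 k]

/-- Hahn's characterization (one direction): if `u` is regular with monic OPS `P` and
satisfies the Pearson equation `D(φu) = ψu` for an admissible pair `(φ, ψ)`, then the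
normalized derivatives `Qₙ = P_{n+1}'/(n+1)` form a monic OPS for `φu`, with
`⟨φu, Qₙ Qₘ⟩ = −(dₙ/(n+1)) ⟨u, P_{n+1}²⟩ δₙₘ` where `dₙ = na + p`. -/
theorem hahn_derivatives_OPS (u : Polynomial ℂ →ₗ[ℂ] ℂ) (a b c p q : ℂ)
    (P : ℕ → Polynomial ℂ)
    (hmonic : ∀ n, (P n).Monic) (hdeg : ∀ n, (P n).degree = n)
    (horth : ∀ m n, m ≠ n → u (P m * P n) = 0)
    (hreg : ∀ n, u (P n * P n) ≠ 0)
    (hadm : ∀ n : ℕ, (n : ℂ) * a + p ≠ 0)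
    (hPearson : ∀ r : Polynomial ℂ,
      -(u ((C a * X ^ 2 + C b * X + C c) * Polynomial.derivative r)) =
        u ((C p * X + C q) * r)) :
    (∀ n : ℕ, (C (((n : ℂ) + 1)⁻¹) * Polynomial.derivative (P (n + 1))).Monic) ∧
    (∀ n : ℕ, (C (((n : ℂ) + 1)⁻¹) * Polynomial.derivative (P (n + 1))).degree = n) ∧
    (∀ n m : ℕ,
      u ((C a * X ^ 2 + C b * X + C c) *
          ((C (((n : ℂ) + 1)⁻¹) * Polynomial.derivative (P (n + 1))) *
           (C (((m : ℂ) + 1)⁻¹) * Polynomial.derivative (P (m + 1))))) =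
        if n = m then -(((n : ℂ) * a + p) / ((n : ℂ) + 1)) * u (P (n + 1) ^ 2) else 0) := by
  have hPnat : ∀ n, (P n).natDegree = n := fun n => natDegree_eq_of_degree_eq_some (hdeg n)
  have hcast : ∀ n : ℕ, ((n : ℂ) + 1) ≠ 0 := by
    intro n
    have h : ((n : ℂ) + 1) = ((n + 1 : ℕ) : ℂ) := by push_cast; ring
    rw [h]
    exact_mod_cast Nat.succ_ne_zero n
  have hPcoeff : ∀ n : ℕ, (P n).coeff n = 1 := by
    intro n
    have := (hmonic n).coeff_natDegree
    rwa [hPnat] at this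
  have hQcoeff : ∀ n : ℕ, (Qd P n).coeff n = 1 := by
    intro n
    rw [Qd_def, coeff_C_mul, coeff_derivative, hPcoeff (n + 1), one_mul]
    push_cast
    exact inv_mul_cancel₀ (hcast n)
  have hQnat : ∀ n : ℕ, (Qd P n).natDegree = n := by
    intro n
    refine le_antisymm ?_ (le_natDegree_of_ne_zero (by rw [hQcoeff n]; exact one_ne_zero))
    calc (Qd P n).natDegree
        ≤ (derivative (P (n + 1))).natDegree := natDegree_C_mul_le _ _
      _ ≤ (P (n + 1)).natDegree - 1 := natDegree_derivative_le _
      _ = n := by rw [hPnat]; omega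
  have hQmonic : ∀ n : ℕ, (Qd P n).Monic := by
    intro n
    rw [Monic, Polynomial.leadingCoeff, hQnat n, hQcoeff n]
  have hQdeg : ∀ n : ℕ, (Qd P n).degree = n := by
    intro n
    rw [degree_eq_natDegree (hQmonic n).ne_zero, hQnat n]
  have hQhigh : ∀ n k : ℕ, n < k → (Qd P n).coeff k = 0 := fun n k h =>
    coeff_eq_zero_of_natDegree_lt (by rw [hQnat n]; exact h)
  have hderivQ0 : derivative (Qd P 0) = 0 := by
    rw [eq_C_of_natDegree_eq_zero (hQnat 0)]
    simp
  have hP0 : P 0 = 1 := by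
    have h0 := hPnat 0
    rw [eq_C_of_natDegree_eq_zero h0]
    have h1 := hPcoeff 0
    rw [h1, map_one]
  have hu_C : ∀ (t : ℂ) (f : Polynomial ℂ), u (C t * f) = t * u f := by
    intro t f; rw [← smul_eq_C_mul, map_smul, smul_eq_mul]
  -- orthogonality of P n against lower-degree polynomials
  have hlow : ∀ (n : ℕ) (s : Polynomial ℂ), s.degree < (n : WithBot ℕ) → u (P n * s) = 0 := by
    have main : ∀ (N n : ℕ) (s : Polynomial ℂ), s.natDegree ≤ N →
        s.degree < (n : WithBot ℕ) → u (P n * s) = 0 := by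
      intro N
      induction N with
      | zero =>
        intro n s hsN hsd
        rcases eq_or_ne s 0 with rfl | hs0
        · simp
        · have hd : s.natDegree = 0 := le_antisymm hsN (Nat.zero_le _)
          have hn : n ≠ 0 := by
            rintro rfl
            rw [degree_eq_natDegree hs0, hd] at hsd
            simp at hsd
          have hPn0 : u (P n) = 0 := by
            have h := horth n 0 hn
            rwa [hP0, mul_one] at h
          rw [eq_C_of_natDegree_eq_zero hd, mul_comm, hu_C, hPn0, mul_zero]
      | succ N ih =>
        intro n s hsN hsd
        rcases eq_or_ne s 0 with rfl | hs0
        · simp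
        · have hdn : s.natDegree < n := by
            have h := hsd
            rw [degree_eq_natDegree hs0] at h
            exact_mod_cast h
          set t := s - C s.leadingCoeff * P s.natDegree with htdef
          have hle : t.natDegree ≤ s.natDegree :=
            le_trans (natDegree_sub_le _ _)
              (max_le le_rfl (le_trans (natDegree_C_mul_le _ _) (hPnat s.natDegree).le))
          have hsplit : P n * s = C s.leadingCoeff * (P n * P s.natDegree) + P n * t := by
            rw [htdef]; ring
          have horthd : u (P n * P s.natDegree) = 0 := horth n s.natDegree (by omega)
          have htN : t.natDegree ≤ N := by
            rcases eq_or_ne t 0 with h0 | h0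
            · rw [h0]; simp
            · have hcoe : t.coeff s.natDegree = 0 := by
                rw [htdef, coeff_sub, coeff_C_mul, hPcoeff s.natDegree, mul_one,
                  Polynomial.leadingCoeff, sub_self]
              have hne : t.natDegree ≠ s.natDegree := fun h => by
                have hlc := Polynomial.leadingCoeff_ne_zero.mpr h0
                rw [Polynomial.leadingCoeff, h, hcoe] at hlc
                exact hlc rfl
              omega
          have htdeg : t.degree < (n : WithBot ℕ) := by
            rcases eq_or_ne t 0 with h0 | h0
            · rw [h0, degree_zero]
              exact_mod_cast WithBot.bot_lt_coe n
            · rw [degree_eq_natDegree h0]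
              exact_mod_cast lt_of_le_of_lt hle hdn
          rw [hsplit, map_add, hu_C, horthd, mul_zero, zero_add]
          exact ih n t htN htdeg
    exact fun n s h => main s.natDegree n s le_rfl h
  -- decomposition of ψ Qm + φ Qm'
  have hS : ∀ m : ℕ, ∃ T : Polynomial ℂ,
      (C p * X + C q) * Qd P m + (C a * X ^ 2 + C b * X + C c) * derivative (Qd P m)
        = C ((m : ℂ) * a + p) * P (m + 1) + T ∧ T.degree < ((m + 1 : ℕ) : WithBot ℕ) := by
    intro m
    set S := (C p * X + C q) * Qd P m
      + (C a * X ^ 2 + C b * X + C c) * derivative (Qd P m) with hSdef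
    refine ⟨S - C ((m : ℂ) * a + p) * P (m + 1), by ring, ?_⟩
    rw [degree_lt_iff_coeff_zero]
    intro k hk
    rw [coeff_sub, hSdef, coeff_add, coeff_C_mul]
    rcases eq_or_ne k (m + 1) with rfl | hkm
    · have hpsi : ((C p * X + C q) * Qd P m).coeff (m + 1) = p := by
        rw [coeff_psi_mul, hQcoeff m, hQhigh m (m + 1) (by omega), mul_one, mul_zero, add_zero]
      rw [hpsi, hPcoeff (m + 1), mul_one]
      rcases m with _ | m''
      · rw [hderivQ0, mul_zero, coeff_zero]
        push_cast; ring
      · have hphi : ((C a * X ^ 2 + C b * X + C c) * derivative (Qd P (m'' + 1))).coeff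
            (m'' + 1 + 1) = a * (((m'' : ℂ) + 1) + 1 - 1) := by
          rw [show m'' + 1 + 1 = m'' + 2 from rfl, coeff_phi_mul, coeff_derivative,
            coeff_derivative, coeff_derivative, hQcoeff (m'' + 1),
            hQhigh (m'' + 1) (m'' + 1 + 1) (by omega), hQhigh (m'' + 1) (m'' + 2 + 1) (by omega)]
          push_cast; ring
        rw [hphi]
        push_cast; ring
    · have hk' : m + 1 ≤ k := by exact_mod_cast hk
      have hPk : (P (m + 1)).coeff k = 0 :=
        coeff_eq_zero_of_natDegree_lt (by rw [hPnat]; omega)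
      obtain ⟨j, rfl⟩ : ∃ j, k = j + 2 := ⟨k - 2, by omega⟩
      have hpsi : ((C p * X + C q) * Qd P m).coeff (j + 2) = 0 := by
        rw [show j + 2 = (j + 1) + 1 from rfl, coeff_psi_mul,
          hQhigh m (j + 1) (by omega), hQhigh m (j + 1 + 1) (by omega), mul_zero, mul_zero,
          add_zero]
      have hphi : ((C a * X ^ 2 + C b * X + C c) * derivative (Qd P m)).coeff (j + 2) = 0 := by
        rw [coeff_phi_mul, coeff_derivative, coeff_derivative, coeff_derivative,
          hQhigh m (j + 1) (by omega), hQhigh m (j + 1 + 1) (by omega),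
          hQhigh m (j + 2 + 1) (by omega)]
        ring
      rw [hpsi, hphi, hPk, mul_zero, add_zero, sub_zero]
  -- the key orthogonality relation for m ≤ n
  have key : ∀ n m : ℕ, m ≤ n →
      u ((C a * X ^ 2 + C b * X + C c) * (Qd P n * Qd P m))
        = if n = m then -(((n : ℂ) * a + p) / ((n : ℂ) + 1)) * u (P (n + 1) ^ 2) else 0 := by
    intro n m hmn
    have hper := hPearson (P (n + 1) * Qd P m)
    have hder : derivative (P (n + 1)) = C ((n : ℂ) + 1) * Qd P n := by
      rw [Qd_def, ← mul_assoc, ← C_mul, mul_inv_cancel₀ (hcast n), C_1, one_mul]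
    rw [derivative_mul, hder] at hper
    have harg : (C a * X ^ 2 + C b * X + C c) *
          (C ((n : ℂ) + 1) * Qd P n * Qd P m + P (n + 1) * derivative (Qd P m))
        = C ((n : ℂ) + 1) * ((C a * X ^ 2 + C b * X + C c) * (Qd P n * Qd P m))
          + ((C a * X ^ 2 + C b * X + C c) * derivative (Qd P m)) * P (n + 1) := by ring
    have harg2 : (C p * X + C q) * (P (n + 1) * Qd P m)
        = ((C p * X + C q) * Qd P m) * P (n + 1) := by ring
    rw [harg, harg2, map_add, hu_C] at hper
    obtain ⟨T, hT, hTdeg⟩ := hS m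
    have hsum : u (((C p * X + C q) * Qd P m) * P (n + 1))
          + u (((C a * X ^ 2 + C b * X + C c) * derivative (Qd P m)) * P (n + 1))
        = ((m : ℂ) * a + p) * u (P (m + 1) * P (n + 1)) + u (P (n + 1) * T) := by
      rw [← map_add, ← add_mul, hT]
      have h : (C ((m : ℂ) * a + p) * P (m + 1) + T) * P (n + 1)
          = C ((m : ℂ) * a + p) * (P (m + 1) * P (n + 1)) + P (n + 1) * T := by ring
      rw [h, map_add, hu_C]
    have hz : u (P (n + 1) * T) = 0 := by
      refine hlow (n + 1) T (lt_of_lt_of_le hTdeg ?_)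
      exact_mod_cast Nat.succ_le_succ hmn
    rcases eq_or_lt_of_le hmn with rfl | hltmn
    · rw [if_pos rfl]
      have hsq : u (P (m + 1) * P (m + 1)) = u (P (m + 1) ^ 2) := by rw [sq]
      have h1 : ((m : ℂ) + 1) * u ((C a * X ^ 2 + C b * X + C c) * (Qd P m * Qd P m))
          = -(((m : ℂ) * a + p) * u (P (m + 1) ^ 2)) := by
        linear_combination (-1 : ℂ) * hper - hsum - hz - ((m : ℂ) * a + p) * hsq
      refine mul_left_cancel₀ (hcast m) ?_
      rw [h1]
      field_simp
    · rw [if_neg (by omega)]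
      have hW : u (P (m + 1) * P (n + 1)) = 0 := horth (m + 1) (n + 1) (by omega)
      have h1 : ((n : ℂ) + 1)
          * u ((C a * X ^ 2 + C b * X + C c) * (Qd P n * Qd P m)) = 0 := by
        linear_combination (-1 : ℂ) * hper - hsum - hz - ((m : ℂ) * a + p) * hW
      exact (mul_eq_zero.mp h1).resolve_left (hcast n)
  have main3 : ∀ n m : ℕ,
      u ((C a * X ^ 2 + C b * X + C c) * (Qd P n * Qd P m))
        = if n = m then -(((n : ℂ) * a + p) / ((n : ℂ) + 1)) * u (P (n + 1) ^ 2) else 0 := by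
    intro n m
    rcases le_or_gt m n with h | h
    · exact key n m h
    · have h2 := key m n h.le
      rw [mul_comm (Qd P m) (Qd P n), if_neg (by omega : ¬ m = n)] at h2
      rw [if_neg (by omega : ¬ n = m)]
      exact h2
  exact ⟨hQmonic, hQdeg, main3⟩
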